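/- With Tₖ and cₖ as in the construction (Tₖ the degree-k Taylor polynomial of φ(u) = (1/2)(1-4u)^{-1/2} - 1/2 at 0, cₖ(t) = t + (2t-1)Tₖ(t(1-t))), one has cₖ(t) = (1−2t)·Σ_{i=k+1}^∞ aᵢ·tⁱ(1−t)ⁱ for all t ∈ [0, 1/2), where aᵢ are the Taylor coefficients of φ at 0. -/

import Mathlib

open Finset

private lemma prod_half_eq (i : ℕ) :
    ∏ j ∈ range i, ((j : ℝ) + 1 / 2)
      = (Nat.factorial (2 * i) : ℝ) / (4 ^ i * Nat.factorial i) := by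
  induction i with
  | zero => simp
  | succ i ih =>
    rw [Finset.prod_range_succ, ih, show 2 * (i + 1) = (2 * i + 1) + 1 by ring,
      Nat.factorial_succ (2 * i + 1), Nat.factorial_succ (2 * i), Nat.factorial_succ i]
    have h1 : (Nat.factorial i : ℝ) ≠ 0 := Nat.cast_ne_zero.2 (Nat.factorial_ne_zero i)
    push_cast
    field_simp
    ring

private lemma central_cast (i : ℕ) :
    (Nat.centralBinom i : ℝ)
      = (Nat.factorial (2 * i) : ℝ) / (Nat.factorial i * Nat.factorial i) := by
  have h : i ≤ 2 * i := by omega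
  have := Nat.choose_mul_factorial_mul_factorial h
  rw [show 2 * i - i = i by omega] at this
  have h1 : (Nat.factorial i : ℝ) ≠ 0 := Nat.cast_ne_zero.2 (Nat.factorial_ne_zero i)
  rw [Nat.centralBinom]
  field_simp
  push_cast [← this]; ring

private lemma cb_le_four_pow (n : ℕ) : Nat.centralBinom n ≤ 4 ^ n := by
  have h1 : Nat.centralBinom n ≤ ∑ m ∈ range (2 * n + 1), (2 * n).choose m := by
    apply Finset.single_le_sum (f := fun m => (2 * n).choose m)
    · intro i _; exact Nat.zero_le _
    · rw [Finset.mem_range]; omega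
  calc Nat.centralBinom n ≤ ∑ m ∈ range (2 * n + 1), (2 * n).choose m := h1
    _ = 2 ^ (2 * n) := Nat.sum_range_choose (2 * n)
    _ = 4 ^ n := by rw [pow_mul]; norm_num

private lemma reflect_aux' (m : ℕ) :
    2 * ∑ j ∈ range (m + 1), j * Nat.centralBinom j * Nat.centralBinom (m - j)
      = m * ∑ j ∈ range (m + 1), Nat.centralBinom j * Nat.centralBinom (m - j) := by
  have h := Finset.sum_range_reflect
    (fun j => j * Nat.centralBinom j * Nat.centralBinom (m - j)) (m + 1)
  rw [two_mul]
  nth_rewrite 1 [← h]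
  rw [← Finset.sum_add_distrib, Finset.mul_sum]
  apply Finset.sum_congr rfl
  intro j hj
  rw [Finset.mem_range] at hj
  obtain ⟨d, rfl⟩ := Nat.exists_eq_add_of_le (Nat.lt_succ_iff.mp hj)
  simp only [show j + d + 1 - 1 - j = d by omega, show j + d - j = d by omega,
    show j + d - d = j by omega]
  ring

private lemma conv (n : ℕ) :
    ∑ j ∈ range (n + 1), Nat.centralBinom j * Nat.centralBinom (n - j) = 4 ^ n := by
  induction n with
  | zero => simp [Nat.centralBinom]
  | succ n ih =>
    have key : (n + 1) * ∑ j ∈ range (n + 2), Nat.centralBinom j * Nat.centralBinom (n + 1 - j)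
        = (n + 1) * 4 ^ (n + 1) := by
      have h2A := reflect_aux' (n + 1)
      have hA : ∑ j ∈ range (n + 2), j * Nat.centralBinom j * Nat.centralBinom (n + 1 - j)
          = ∑ j ∈ range (n + 1), 2 * (2 * j + 1) * Nat.centralBinom j * Nat.centralBinom (n - j) := by
        rw [Finset.sum_range_succ']
        simp only [Nat.zero_mul, Nat.zero_add, add_zero]
        apply Finset.sum_congr rfl
        intro j hj
        rw [show n + 1 - (j + 1) = n - j by omega, ← Nat.succ_mul_centralBinom_succ j]
      have hB : 2 * ∑ j ∈ range (n + 1), j * Nat.centralBinom j * Nat.centralBinom (n - j)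
          = n * 4 ^ n := by rw [reflect_aux' n, ih]
      have hsplit : ∑ j ∈ range (n + 1), 2 * (2 * j + 1) * Nat.centralBinom j * Nat.centralBinom (n - j)
          = 4 * (∑ j ∈ range (n + 1), j * Nat.centralBinom j * Nat.centralBinom (n - j))
            + 2 * ∑ j ∈ range (n + 1), Nat.centralBinom j * Nat.centralBinom (n - j) := by
        rw [Finset.mul_sum, Finset.mul_sum, ← Finset.sum_add_distrib]
        exact Finset.sum_congr rfl fun j _ => by ring
      rw [← h2A, hA, hsplit, ih,
        show (n + 1) * 4 ^ (n + 1) = 2 * (2 * (n * 4 ^ n) + 2 * 4 ^ n) by ring,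
        show (4 : ℕ) * (∑ j ∈ range (n + 1), j * Nat.centralBinom j * Nat.centralBinom (n - j))
          = 2 * (2 * ∑ j ∈ range (n + 1), j * Nat.centralBinom j * Nat.centralBinom (n - j)) by ring,
        hB]
    exact Nat.eq_of_mul_eq_mul_left n.succ_pos key


/-- For `t ∈ [0, 1/2)`, `cₖ(t) = (1-2t)·∑_{i=k+1}^∞ aᵢ tⁱ(1-t)ⁱ`, where the `aᵢ` are
the Taylor coefficients of `φ(u) = (1/2)(1-4u)^(-1/2) - 1/2` at `0` and
`cₖ(t) = t + (2t-1)·Tₖ(t(1-t))` with `Tₖ(u) = ∑_{i=1}^k aᵢuⁱ`. -/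
theorem concatenation_polynomial_tail_sum
    (k : ℕ) (a : ℕ → ℝ) (ha0 : a 0 = 0)
    (ha : ∀ i, 1 ≤ i →
      a i = (1 / 2) * ((4 : ℝ) ^ i / (Nat.factorial i : ℝ)) * ∏ j ∈ Finset.range i, ((j : ℝ) + 1 / 2))
    (c : ℝ → ℝ)
    (hc : ∀ t, c t = t + (2 * t - 1) * ∑ i ∈ Finset.Icc 1 k, a i * (t * (1 - t)) ^ i) :
    ∀ t ∈ Set.Ico (0 : ℝ) (1 / 2), ∃ s : ℝ,
      HasSum (fun i : ℕ => a (i + k + 1) * (t * (1 - t)) ^ (i + k + 1)) s ∧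
        c t = (1 - 2 * t) * s := by
  intro t ht
  obtain ⟨ht0, ht1⟩ := ht
  have h2t : 0 < 1 - 2 * t := by linarith
  have hu0 : 0 ≤ t * (1 - t) := by nlinarith
  set u : ℝ := t * (1 - t) with hu
  have h4u1 : 4 * u < 1 := by nlinarith
  have h4u0 : 0 ≤ 4 * u := by linarith
  set f : ℕ → ℝ := fun i => (Nat.centralBinom i : ℝ) * u ^ i with hf
  have hnorm : Summable fun i => ‖f i‖ := by
    apply Summable.of_nonneg_of_le (fun i => norm_nonneg _) (fun i => ?_)
      (summable_geometric_of_lt_one h4u0 h4u1)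
    have hfi : ‖f i‖ = (Nat.centralBinom i : ℝ) * u ^ i := by
      rw [Real.norm_eq_abs, abs_of_nonneg]
      positivity
    rw [hfi]
    calc (Nat.centralBinom i : ℝ) * u ^ i
        ≤ (4 : ℝ) ^ i * u ^ i := by
          apply mul_le_mul_of_nonneg_right ?_ (pow_nonneg hu0 i)
          exact_mod_cast cb_le_four_pow i
      _ = (4 * u) ^ i := (mul_pow 4 u i).symm
  have hsum : Summable f := hnorm.of_norm
  set F := ∑' i, f i with hFdef
  have hF2 : F * F = (1 - 4 * u)⁻¹ := by
    rw [hFdef, tsum_mul_tsum_eq_tsum_sum_range_of_summable_norm hnorm hnorm]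
    have hterm : ∀ n : ℕ, ∑ j ∈ range (n + 1), f j * f (n - j) = (4 * u) ^ n := by
      intro n
      have h1 : ∑ j ∈ range (n + 1), f j * f (n - j)
          = ((∑ j ∈ range (n + 1), Nat.centralBinom j * Nat.centralBinom (n - j) : ℕ) : ℝ)
            * u ^ n := by
        push_cast
        rw [Finset.sum_mul]
        apply Finset.sum_congr rfl
        intro j hj
        rw [Finset.mem_range] at hj
        rw [hf]
        simp only
        rw [mul_mul_mul_comm, ← pow_add, show j + (n - j) = n by omega]
      rw [h1, conv n, mul_pow, Nat.cast_pow, Nat.cast_ofNat]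
      calc (4:ℝ) ^ n * (t ^ n * (1 - t) ^ n) = 4 ^ n * u ^ n := by rw [hu, mul_pow]
        _ = (4 * u) ^ n := (mul_pow 4 u n).symm
    rw [tsum_congr hterm, tsum_geometric_of_lt_one h4u0 h4u1]
  have hFval : F = (1 - 2 * t)⁻¹ := by
    have hF0 : 0 ≤ F := tsum_nonneg fun i => by positivity
    have h1 : F * F = (1 - 2 * t)⁻¹ * (1 - 2 * t)⁻¹ := by
      rw [hF2, ← mul_inv, show (1 - 2 * t) * (1 - 2 * t) = 1 - 4 * u by rw [hu]; ring]
    calc F = Real.sqrt (F * F) := (Real.sqrt_mul_self hF0).symm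
      _ = Real.sqrt ((1 - 2 * t)⁻¹ * (1 - 2 * t)⁻¹) := by rw [h1]
      _ = (1 - 2 * t)⁻¹ := Real.sqrt_mul_self (by positivity)
  set g : ℕ → ℝ := fun i => a i * u ^ i with hgdef
  have hg : HasSum g (F / 2 - 1 / 2) := by
    have h1 : HasSum (fun i => (1 / 2 : ℝ) * f i) (1 / 2 * F) := hsum.hasSum.mul_left _
    have h2 := h1.update 0 0
    have heq : Function.update (fun i => (1 / 2 : ℝ) * f i) 0 0 = g := by
      funext i
      rcases i with _ | i
      · rw [Function.update_self]
        simp [hgdef, ha0]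
      · rw [Function.update_of_ne (Nat.succ_ne_zero i)]
        simp only [hgdef, hf]
        rw [ha (i + 1) (by omega), prod_half_eq, central_cast]
        have h3 : (Nat.factorial (i + 1) : ℝ) ≠ 0 :=
          Nat.cast_ne_zero.2 (Nat.factorial_ne_zero _)
        field_simp
    rw [heq] at h2
    have hf0 : f 0 = 1 := by simp [hf]
    rw [show F / 2 - 1 / 2 = 0 - 1 / 2 * f 0 + 1 / 2 * F by rw [hf0]; ring]
    exact h2
  refine ⟨F / 2 - 1 / 2 - ∑ i ∈ range (k + 1), g i, ?_, ?_⟩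
  · exact (hasSum_nat_add_iff' (k + 1)).2 hg
  · have hT : ∑ i ∈ range (k + 1), g i = ∑ i ∈ Finset.Icc 1 k, a i * u ^ i := by
      rw [eq_comm]
      apply Finset.sum_subset
      · intro x hx
        simp only [Finset.mem_Icc] at hx
        simp only [Finset.mem_range]
        omega
      · intro x hx hnx
        simp only [Finset.mem_range] at hx
        simp only [Finset.mem_Icc] at hnx
        have : x = 0 := by omega
        simp [this, hgdef, ha0]
    rw [hc t, hT, hFval]
    rw [hu]
    have hne : 1 - 2 * t ≠ 0 := ne_of_gt h2t
    linear_combination (-1 / 2 : ℝ) * mul_inv_cancel₀ hne
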